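/- Any two nonempty regular closed subsets of the five-point space T have nonempty intersection; in fact every nonempty regular closed subset of T contains the point b. -/
import Mathlib


/-- The five-point space `T = {x, y, z, a, b}` (five pairwise distinct points). -/
inductive Pt : Type
  | x | y | z | a | b
deriving DecidableEq

open Pt

/-- The topology on `T` generated by the subbasis `{x,z}`, `{y,z}`, `{x,a,y}`. -/
instance : TopologicalSpace Pt :=
  TopologicalSpace.generateFrom ({{x, z}, {y, z}, {x, a, y}} : Set (Set Pt))

lemma open_b_univ : ∀ U : Set Pt,
    TopologicalSpace.GenerateOpen ({{x, z}, {y, z}, {x, a, y}} : Set (Set Pt)) U →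
    b ∈ U → U = Set.univ := by
  intro U h
  induction h with
  | basic s hs =>
    intro hb
    rcases hs with rfl | rfl | rfl <;> simp at hb
  | univ => intro _; rfl
  | inter s t hs ht ihs iht =>
    intro hb
    rw [ihs hb.1, iht hb.2, Set.univ_inter]
  | sUnion S hS ih =>
    intro hb
    obtain ⟨t, htS, hbt⟩ := hb
    apply Set.eq_univ_of_univ_subset
    rw [← ih t htS hbt]
    exact Set.subset_sUnion_of_mem htS

lemma b_mem_closure {S : Set Pt} (hS : S.Nonempty) : b ∈ closure S := by
  rw [mem_closure_iff]
  intro U hU hbU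
  rw [open_b_univ U hU hbU, Set.univ_inter]
  exact hS

/-- Any two nonempty regular closed subsets of T have nonempty
intersection; in fact every nonempty regular closed subset of T contains b. -/
theorem stmt5 :
    (∀ A B : Set Pt, A = closure (interior A) → B = closure (interior B) →
      A.Nonempty → B.Nonempty → (A ∩ B).Nonempty) ∧
    (∀ A : Set Pt, A = closure (interior A) → A.Nonempty → b ∈ A) := by
  have key : ∀ A : Set Pt, A = closure (interior A) → A.Nonempty → b ∈ A := by
    intro A hA hAne
    have hi : (interior A).Nonempty := by
      by_contra h
      rw [Set.not_nonempty_iff_eq_empty] at h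
      rw [hA, h, closure_empty] at hAne
      exact Set.not_nonempty_empty hAne
    rw [hA]
    exact b_mem_closure hi
  exact ⟨fun A B hA hB hAne hBne => ⟨b, key A hA hAne, key B hB hBne⟩, key⟩
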